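/- arXiv:0903.1789 — 2 statements merged into one kernel-verified Lean document; each statement's English description precedes it below -/
import Mathlib

section
/- Let D be a type with binary relations r2up and r3, and let r2down be the converse of r2up. Suppose that whenever r3 D1 D2 holds there exists D3 with (Relation.ReflTransGen r2up) D1 D3 and L D2 D3, where L (the 'lollipop' relation) satisfies: (a) if L a b and Relation.ReflTransGen r2up a c, then there exists d with Relation.ReflTransGen r2up b d and L c d (lollipops commute past up-type-2 sequences); and (b) if L a b then Relation.ReflTransGen r2down b a. Then any two elements joined by a chain of r2up, r2down and r3 steps with all r3 steps occurring in the middle are joined by a chain of r2up steps followed by r2down steps followed by a single lollipop-removal; in particular if D2 is reachable from D1 by a sorted sequence (r2up* then r3* then r2down*), and D0 is reachable from D1 by a single r3 step backwards, then D0 reaches D2 by a sorted sequence as well. -/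
theorem stmt1 {D : Type*} (r2up r2down r3 L : D → D → Prop)
    (hdown : ∀ x y, r2down x y ↔ r2up y x)
    (h3 : ∀ D1 D2, r3 D1 D2 → ∃ D3, Relation.ReflTransGen r2up D1 D3 ∧ L D2 D3)
    (hLcomm : ∀ a b c, L a b → Relation.ReflTransGen r2up a c →
      ∃ d, Relation.ReflTransGen r2up b d ∧ L c d)
    (hLrem : ∀ a b, L a b → Relation.ReflTransGen r2down b a)
    (D0 D1 D2 : D)
    (hsorted : ∃ z1 z2, Relation.ReflTransGen r2up D1 z1 ∧
      Relation.ReflTransGen r3 z1 z2 ∧ Relation.ReflTransGen r2down z2 D2)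
    (hstep : r3 D0 D1) :
    ∃ z1 z2, Relation.ReflTransGen r2up D0 z1 ∧
      Relation.ReflTransGen r3 z1 z2 ∧ Relation.ReflTransGen r2down z2 D2 := by
  -- Generalize hLcomm to chains of L-steps
  have comm' : ∀ a b c, Relation.ReflTransGen L a b → Relation.ReflTransGen r2up a c →
      ∃ d, Relation.ReflTransGen r2up b d ∧ Relation.ReflTransGen L c d := by
    intro a b c hab hac
    induction hab with
    | refl => exact ⟨c, hac, Relation.ReflTransGen.refl⟩
    | tail hm hmb ih =>
      obtain ⟨d, hmd, hcd⟩ := ih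
      obtain ⟨e, hbe, hde⟩ := hLcomm _ _ _ hmb hmd
      exact ⟨e, hbe, hcd.tail hde⟩
  -- Chains of L-steps can be removed by r2down chains
  have remL : ∀ x y, Relation.ReflTransGen L x y → Relation.ReflTransGen r2down y x := by
    intro x y hxy
    induction hxy with
    | refl => exact Relation.ReflTransGen.refl
    | tail hm hmy ih => exact (hLrem _ _ hmy).trans ih
  obtain ⟨z1, z2, h1, h2, h3'⟩ := hsorted
  obtain ⟨D3, hup, hL⟩ := h3 _ _ hstep
  obtain ⟨d0, hd0, hLz1⟩ := hLcomm _ _ _ hL h1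
  -- push the lollipop chain past the r3 chain
  have key : ∃ e, Relation.ReflTransGen r2up d0 e ∧ Relation.ReflTransGen L z2 e := by
    clear h3'
    induction h2 with
    | refl => exact ⟨d0, Relation.ReflTransGen.refl, Relation.ReflTransGen.single hLz1⟩
    | @tail c c' hm hcc' ih =>
      obtain ⟨e, hde, hce⟩ := ih
      obtain ⟨E, hcE, hLE⟩ := h3 _ _ hcc'
      obtain ⟨d, hed, hEd⟩ := comm' _ _ _ hce hcE
      exact ⟨d, hde.trans hed, hEd.head hLE⟩
  obtain ⟨e, hde, hz2e⟩ := key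
  exact ⟨e, e, (hup.trans hd0).trans hde, Relation.ReflTransGen.refl,
    (remL _ _ hz2e).trans h3'⟩
end

section
/- Let α be a type with a relation up, its converse down, and a relation mid. Suppose every pair x, y connected by the equivalence relation generated by up and mid (i.e., by the reflexive-transitive closure of the symmetric union) satisfies: there exists a sorted path x →up* z1 →mid* z2 →down* y. Further, let extraUp be another relation on α and f : α → ℤ an invariant constant on up, down, mid steps, changed by ±1 by each extraUp step with both signs realizable from any point, and assume two elements with equal f-value are connected by up/mid/down chains. Then for any x, y in the same extraUp/up/mid/down equivalence class, there is a path from x to y consisting of extraUp-steps, then up-steps, then mid-steps, then down-steps. -/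
theorem stmt5 {α : Type*} (extraUp up mid down : α → α → Prop)
    (hdown : ∀ x y, down x y ↔ up y x)
    (f : α → ℤ)
    (hfu : ∀ x y, up x y → f x = f y)
    (hfm : ∀ x y, mid x y → f x = f y)
    (hfd : ∀ x y, down x y → f x = f y)
    (hfe : ∀ x y, extraUp x y → f y = f x + 1 ∨ f y = f x - 1)
    (hrealize : ∀ x (ε : ℤ), ε = 1 ∨ ε = -1 → ∃ y, extraUp x y ∧ f y = f x + ε)
    (hsorted : ∀ x y, Relation.ReflTransGen
        (fun a b => up a b ∨ mid a b ∨ up b a ∨ mid b a) x y →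
      ∃ z1 z2, Relation.ReflTransGen up x z1 ∧ Relation.ReflTransGen mid z1 z2 ∧
        Relation.ReflTransGen down z2 y)
    (htrace : ∀ x y, f x = f y →
      Relation.ReflTransGen (fun a b => up a b ∨ mid a b ∨ down a b) x y)
    (x y : α)
    (h : Relation.EqvGen
      (fun a b => extraUp a b ∨ up a b ∨ mid a b ∨ down a b) x y) :
    ∃ a b c, Relation.ReflTransGen extraUp x a ∧ Relation.ReflTransGen up a b ∧
      Relation.ReflTransGen mid b c ∧ Relation.ReflTransGen down c y := by
  -- Step 1: reach `a` with `f a = f y` using extraUp steps.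
  have aux : ∀ (ε : ℤ), (ε = 1 ∨ ε = -1) → ∀ (n : ℕ) (w : α),
      ∃ a, Relation.ReflTransGen extraUp w a ∧ f a = f w + n * ε := by
    intro ε hε n
    induction n with
    | zero => intro w; exact ⟨w, Relation.ReflTransGen.refl, by simp⟩
    | succ n ih =>
      intro w
      obtain ⟨a, ha, hfa⟩ := ih w
      obtain ⟨b, hb, hfb⟩ := hrealize a ε hε
      exact ⟨b, ha.tail hb, by rw [hfb, hfa]; push_cast; ring⟩
  have ⟨a, hxa, hfa⟩ : ∃ a, Relation.ReflTransGen extraUp x a ∧ f a = f y := by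
    rcases le_or_gt (f x) (f y) with hle | hlt
    · obtain ⟨a, ha, hfa⟩ := aux 1 (Or.inl rfl) (f y - f x).toNat x
      exact ⟨a, ha, by rw [hfa]; omega⟩
    · obtain ⟨a, ha, hfa⟩ := aux (-1) (Or.inr rfl) (f x - f y).toNat x
      exact ⟨a, ha, by rw [hfa]; omega⟩
  -- Step 2: trace gives an up/mid/down chain from a to y; sort it.
  have ht := htrace a y hfa
  have hsym : Relation.ReflTransGen
      (fun p q => up p q ∨ mid p q ∨ up q p ∨ mid q p) a y := by
    refine Relation.ReflTransGen.mono ?_ a y ht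
    intro p q hpq
    rcases hpq with h1 | h2 | h3
    · exact Or.inl h1
    · exact Or.inr (Or.inl h2)
    · exact Or.inr (Or.inr (Or.inl ((hdown p q).mp h3)))
  obtain ⟨z1, z2, h1, h2, h3⟩ := hsorted a y hsym
  exact ⟨a, z1, z2, hxa, h1, h2, h3⟩
end
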